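/- Let 0 < r < 1 and let m₃ ∈ (1/2, 3/2) satisfy 2rm₃ = (m₃ − 1/2)²(m₃ + 3/2). Define h(σ, η) = (η − σ/2, √(r(2η² − 3ση) + (9/4)(η − σ/2)²)) wherever the radicand is nonnegative. Then for every s ≥ 0 the radicand at (s, m₃ s) equals s² m₃² (m₃ − 1/2)² ≥ 0 and h(s, m₃ s) = ((m₃ − 1/2)s, m₃ (m₃ − 1/2)s); hence the ray { (s, m₃ s) : s ≥ 0 } is invariant under h, and on this ray h contracts the distance to the origin by the factor m₃ − 1/2 ∈ (0, 1). -/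
import Mathlib


/-- **Invariant ray of the leading-order blown-up chatter map.**
Let `0 < r < 1` and let `m₃ ∈ (1/2, 3/2)` satisfy `2rm₃ = (m₃ − 1/2)²(m₃ + 3/2)`.
With `Q(σ, η) = r(2η² − 3ση) + (9/4)(η − σ/2)²` and `h(σ, η) = (η − σ/2, √(Q(σ, η)))`,
for every `s ≥ 0` the radicand at `(s, m₃ s)` equals `s²m₃²(m₃ − 1/2)² ≥ 0` and
`h(s, m₃ s) = ((m₃ − 1/2)s, m₃(m₃ − 1/2)s)`; hence the ray `{(s, m₃ s) : s ≥ 0}`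
is invariant under `h`, on which `h` contracts the distance to the origin by the
factor `m₃ − 1/2 ∈ (0, 1)`. -/
theorem invariant_ray_blowup (r m3 : ℝ) (hr0 : 0 < r) (hr1 : r < 1)
    (hm3 : m3 ∈ Set.Ioo (1 / 2 : ℝ) (3 / 2))
    (heq : 2 * r * m3 = (m3 - 1 / 2) ^ 2 * (m3 + 3 / 2))
    (Q : ℝ → ℝ → ℝ)
    (hQ : ∀ σ η : ℝ, Q σ η = r * (2 * η ^ 2 - 3 * σ * η) + (9 / 4) * (η - σ / 2) ^ 2)
    (h : ℝ → ℝ → ℝ × ℝ)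
    (hh : ∀ σ η : ℝ, h σ η = (η - σ / 2, Real.sqrt (Q σ η))) :
    (∀ s : ℝ, 0 ≤ s →
      Q s (m3 * s) = s ^ 2 * m3 ^ 2 * (m3 - 1 / 2) ^ 2 ∧
      0 ≤ Q s (m3 * s) ∧
      h s (m3 * s) = ((m3 - 1 / 2) * s, m3 * ((m3 - 1 / 2) * s))) ∧
    (∀ s : ℝ, 0 ≤ s → ∃ s' : ℝ, 0 ≤ s' ∧ h s (m3 * s) = (s', m3 * s')) ∧
    0 < m3 - 1 / 2 ∧ m3 - 1 / 2 < 1 ∧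
    (∀ s : ℝ, 0 ≤ s →
      ‖h s (m3 * s)‖ = (m3 - 1 / 2) * ‖((s, m3 * s) : ℝ × ℝ)‖) := by
  obtain ⟨hm1, hm2⟩ := hm3
  have hm0 : 0 < m3 := by linarith
  have hc : 0 < m3 - 1 / 2 := by linarith
  have key : ∀ s : ℝ, 0 ≤ s →
      Q s (m3 * s) = s ^ 2 * m3 ^ 2 * (m3 - 1 / 2) ^ 2 ∧
      0 ≤ Q s (m3 * s) ∧
      h s (m3 * s) = ((m3 - 1 / 2) * s, m3 * ((m3 - 1 / 2) * s)) := by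
    intro s hs
    have hQs : Q s (m3 * s) = s ^ 2 * m3 ^ 2 * (m3 - 1 / 2) ^ 2 := by
      rw [hQ]
      nlinarith [heq, sq_nonneg s, sq_nonneg m3]
    have hQnn : 0 ≤ Q s (m3 * s) := by
      rw [hQs]; positivity
    refine ⟨hQs, hQnn, ?_⟩
    rw [hh, hQs]
    have hsqrt : Real.sqrt (s ^ 2 * m3 ^ 2 * (m3 - 1 / 2) ^ 2)
        = m3 * ((m3 - 1 / 2) * s) := by
      rw [show s ^ 2 * m3 ^ 2 * (m3 - 1 / 2) ^ 2 = (m3 * ((m3 - 1 / 2) * s)) ^ 2 by ring]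
      exact Real.sqrt_sq (by positivity)
    rw [hsqrt]
    exact Prod.ext (by ring) rfl
  refine ⟨key, ?_, hc, by linarith, ?_⟩
  · intro s hs
    exact ⟨(m3 - 1 / 2) * s, by positivity, (key s hs).2.2⟩
  · intro s hs
    have h1 : h s (m3 * s) = (m3 - 1 / 2) • ((s, m3 * s) : ℝ × ℝ) := by
      rw [(key s hs).2.2]
      simp [Prod.smul_mk, smul_eq_mul]; ring
    rw [h1, norm_smul, Real.norm_eq_abs, abs_of_pos hc]
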